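/- Method of characteristics for Burgers' equation: let u₀ : ℝ → ℝ be C¹ and let T > 0 be such that 1 + t u₀'(x) > 0 for all x ∈ ℝ and t ∈ [0,T), and such that Φ_t(x) := x + t u₀(x) is a bijection of ℝ for each t ∈ [0,T). Then u(Φ_t(x), t) := u₀(x) defines a C¹ function u on ℝ × [0,T) satisfying ∂_t u + u ∂_x u = 0 with u(·,0) = u₀. -/

import Mathlib

open Function Set Filter Topology

noncomputable def burgersEquiv (a b : ℝ) (ha : a ≠ 0) : (ℝ × ℝ) ≃L[ℝ] (ℝ × ℝ) :=
  ContinuousLinearEquiv.equivOfInverse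
    ((a • ContinuousLinearMap.fst ℝ ℝ ℝ + b • ContinuousLinearMap.snd ℝ ℝ ℝ).prod
      (ContinuousLinearMap.snd ℝ ℝ ℝ))
    ((a⁻¹ • (ContinuousLinearMap.fst ℝ ℝ ℝ - b • ContinuousLinearMap.snd ℝ ℝ ℝ)).prod
      (ContinuousLinearMap.snd ℝ ℝ ℝ))
    (fun p => by ext <;> simp; field_simp)
    (fun p => by ext <;> simp; field_simp; ring)

/-- Method of characteristics for Burgers' equation: if the characteristic maps
`Φ_t(x) = x + t u₀(x)` are bijections with positive spatial derivative on `[0, T)`,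
then `u(Φ_t(x), t) := u₀(x)` defines a `C¹` solution of `∂ₜu + u ∂ₓu = 0` with
initial data `u₀`. -/
theorem burgers_characteristics (u₀ : ℝ → ℝ) (hu₀ : ContDiff ℝ 1 u₀)
    (T : ℝ) (hT : 0 < T)
    (hpos : ∀ x : ℝ, ∀ t ∈ Set.Ico (0 : ℝ) T, 0 < 1 + t * deriv u₀ x)
    (hbij : ∀ t ∈ Set.Ico (0 : ℝ) T, Function.Bijective (fun x : ℝ => x + t * u₀ x)) :
    ∃ u : ℝ → ℝ → ℝ,
      (∀ x : ℝ, ∀ t ∈ Set.Ico (0 : ℝ) T, u (x + t * u₀ x) t = u₀ x) ∧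
      (∀ y : ℝ, u y 0 = u₀ y) ∧
      ContDiffOn ℝ 1 (fun p : ℝ × ℝ => u p.1 p.2) (Set.univ ×ˢ Set.Ico (0 : ℝ) T) ∧
      (∀ y : ℝ, ∀ t ∈ Set.Ioo (0 : ℝ) T,
        deriv (fun τ => u y τ) t + u y t * deriv (fun z => u z t) y = 0) := by
  classical
  set Ψ : ℝ × ℝ → ℝ × ℝ := fun p => (p.1 + p.2 * u₀ p.1, p.2) with hΨdef
  set F : ℝ → ℝ → ℝ := fun y t => Function.invFun (fun x : ℝ => x + t * u₀ x) y with hFdef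
  set u : ℝ → ℝ → ℝ := fun y t => u₀ (F y t) with hudef
  -- basic facts about F
  have hFr : ∀ y : ℝ, ∀ t ∈ Set.Ico (0:ℝ) T, F y t + t * u₀ (F y t) = y := by
    intro y t ht
    exact Function.invFun_eq ((hbij t ht).surjective y)
  have hFl : ∀ x : ℝ, ∀ t ∈ Set.Ico (0:ℝ) T, F (x + t * u₀ x) t = x := by
    intro x t ht
    exact Function.leftInverse_invFun (hbij t ht).injective x
  have hFuniq : ∀ x y : ℝ, ∀ t ∈ Set.Ico (0:ℝ) T, x + t * u₀ x = y → F y t = x := by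
    intro x y t ht hx
    exact (hbij t ht).injective (by simpa [hx] using hFr y t ht)
  -- smoothness of Ψ and its derivative
  have hΨcd : ContDiff ℝ 1 Ψ :=
    (contDiff_fst.add (contDiff_snd.mul (hu₀.comp contDiff_fst))).prodMk contDiff_snd
  have hΨd : ∀ (p : ℝ × ℝ) (ha : 1 + p.2 * deriv u₀ p.1 ≠ 0),
      HasFDerivAt Ψ ((burgersEquiv (1 + p.2 * deriv u₀ p.1) (u₀ p.1) ha :
        (ℝ×ℝ) →L[ℝ] (ℝ×ℝ))) p := by
    intro p ha
    have hd : HasFDerivAt u₀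
        (ContinuousLinearMap.smulRight (1 : ℝ →L[ℝ] ℝ) (deriv u₀ p.1)) p.1 :=
      ((hu₀.differentiable one_ne_zero) p.1).hasFDerivAt.hasDerivAt.hasFDerivAt
    have h1 : HasFDerivAt (fun q : ℝ × ℝ => q.1 + q.2 * u₀ q.1)
        ((ContinuousLinearMap.fst ℝ ℝ ℝ)
          + (p.2 • ((ContinuousLinearMap.smulRight (1 : ℝ →L[ℝ] ℝ) (deriv u₀ p.1)).comp
              (ContinuousLinearMap.fst ℝ ℝ ℝ)) + u₀ p.1 • ContinuousLinearMap.snd ℝ ℝ ℝ)) p :=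
      (hasFDerivAt_fst).add ((hasFDerivAt_snd).mul (hd.comp p (hasFDerivAt_fst)))
    have h2 := h1.prodMk (hasFDerivAt_snd : HasFDerivAt (@Prod.snd ℝ ℝ) (ContinuousLinearMap.snd ℝ ℝ ℝ) p)
    refine h2.congr_fderiv (Eq.symm ?_)
    refine ContinuousLinearMap.ext fun q => ?_
    simp [burgersEquiv]
    ring
  -- local inverse of Ψ at characteristic points
  have main : ∀ x t (ht : t ∈ Set.Ico (0:ℝ) T), ∃ g : ℝ × ℝ → ℝ × ℝ,
      ContDiffAt ℝ 1 g (Ψ (x, t)) ∧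
      (∀ᶠ q in 𝓝 (Ψ (x, t)), Ψ (g q) = q) ∧
      HasFDerivAt g
        (((burgersEquiv (1 + t * deriv u₀ x) (u₀ x) (ne_of_gt (hpos x t ht))).symm :
          (ℝ×ℝ) →L[ℝ] (ℝ×ℝ))) (Ψ (x, t)) := by
    intro x t ht
    have ha : 1 + (x, t).2 * deriv u₀ (x, t).1 ≠ 0 := ne_of_gt (hpos x t ht)
    have hfd := hΨd (x, t) ha
    have hcd : ContDiffAt ℝ 1 Ψ (x, t) := hΨcd.contDiffAt
    have hstrict : HasStrictFDerivAt Ψ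
        ((burgersEquiv (1 + t * deriv u₀ x) (u₀ x) (ne_of_gt (hpos x t ht)) :
          (ℝ×ℝ) →L[ℝ] (ℝ×ℝ))) (x, t) :=
      hcd.hasStrictFDerivAt' hfd one_ne_zero
    refine ⟨hstrict.localInverse Ψ _ _, ?_, hstrict.eventually_right_inverse,
      hstrict.to_localInverse.hasFDerivAt⟩
    exact hcd.to_localInverse hfd one_ne_zero
  -- agreement of local inverse with F
  have agree : ∀ (g : ℝ × ℝ → ℝ × ℝ) (q : ℝ × ℝ), Ψ (g q) = q → q.2 ∈ Set.Ico (0:ℝ) T →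
      u₀ ((g q).1) = u q.1 q.2 := by
    intro g q h1 h2
    have h1a : (g q).1 + (g q).2 * u₀ ((g q).1) = q.1 := (Prod.ext_iff.mp h1).1
    have h1b : (g q).2 = q.2 := (Prod.ext_iff.mp h1).2
    rw [h1b] at h1a
    have : F q.1 q.2 = (g q).1 := hFuniq _ _ _ h2 h1a
    simp [hudef, this]
  have hΨeq : ∀ y t, t ∈ Set.Ico (0:ℝ) T → Ψ (F y t, t) = (y, t) := by
    intro y t ht
    simp only [hΨdef]
    exact Prod.ext (hFr y t ht) rfl
  refine ⟨u, ?_, ?_, ?_, ?_⟩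
  · intro x t ht
    simp only [hudef, hFl x t ht]
  · intro y
    have h0 : (0:ℝ) ∈ Set.Ico (0:ℝ) T := ⟨le_rfl, hT⟩
    have : F y 0 = y := hFuniq y y 0 h0 (by ring)
    simp [hudef, this]
  · -- C¹ regularity
    rintro ⟨y, t⟩ hyt
    have ht : t ∈ Set.Ico (0:ℝ) T := hyt.2
    obtain ⟨g, gcd, gev, -⟩ := main (F y t) t ht
    rw [hΨeq y t ht] at gcd gev
    have hcd : ContDiffAt ℝ 1 (fun q : ℝ × ℝ => u₀ ((g q).1)) (y, t) :=
      hu₀.contDiffAt.comp _ (contDiffAt_fst.comp _ gcd)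
    refine hcd.contDiffWithinAt.congr_of_eventuallyEq ?_ ?_
    · have h := (gev.filter_mono nhdsWithin_le_nhds).and
        (eventually_mem_nhdsWithin (s := Set.univ ×ˢ Set.Ico (0:ℝ) T) (a := ((y:ℝ), t)))
      refine h.mono fun q hq => ?_
      exact (agree g q hq.1 hq.2.2).symm
    · exact (agree g (y, t) gev.self_of_nhds ht).symm
  · -- the PDE
    intro y t ht
    have htIco : t ∈ Set.Ico (0:ℝ) T := ⟨le_of_lt ht.1, ht.2⟩
    obtain ⟨g, -, gev, gfd⟩ := main (F y t) t htIco
    rw [hΨeq y t htIco] at gev gfd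
    have ha : 1 + t * deriv u₀ (F y t) ≠ 0 := ne_of_gt (hpos (F y t) t htIco)
    set e := burgersEquiv (1 + t * deriv u₀ (F y t)) (u₀ (F y t)) (ne_of_gt (hpos (F y t) t htIco))
      with hedef
    have hgpt : g (y, t) = (F y t, t) := by
      have h1 := gev.self_of_nhds
      have h1a : (g (y,t)).1 + (g (y,t)).2 * u₀ ((g (y,t)).1) = y := (Prod.ext_iff.mp h1).1
      have h1b : (g (y,t)).2 = t := (Prod.ext_iff.mp h1).2
      rw [h1b] at h1a
      exact Prod.ext (hFuniq _ _ _ htIco h1a).symm h1b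
    have hg1 : (g (y, t)).1 = F y t := by rw [hgpt]
    have hu₀der : HasDerivAt u₀ (deriv u₀ (F y t)) ((g (y, t)).1) := by
      rw [hg1]
      exact ((hu₀.differentiable one_ne_zero) (F y t)).hasDerivAt
    -- time derivative
    have hderT : HasDerivAt (fun τ => u₀ ((g (y, τ)).1))
        (deriv u₀ (F y t) * ((e.symm (0, 1)).1)) t := by
      have hcurve : HasDerivAt (fun τ : ℝ => ((y : ℝ), τ)) (0, 1) t :=
        (hasDerivAt_const t y).prodMk (hasDerivAt_id t)
      have h1 : HasDerivAt (fun τ => g (y, τ)) ((e.symm : (ℝ×ℝ) →L[ℝ] (ℝ×ℝ)) (0, 1)) t :=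
        gfd.comp_hasDerivAt t hcurve
      have h2 : HasDerivAt (fun τ => (g (y, τ)).1) ((e.symm (0, 1)).1) t :=
        (hasFDerivAt_fst (p := g (y, t))).comp_hasDerivAt (f := fun τ => g (y, τ)) t h1
      exact hu₀der.comp t h2
    have hderX : HasDerivAt (fun z => u₀ ((g (z, t)).1))
        (deriv u₀ (F y t) * ((e.symm (1, 0)).1)) y := by
      have hcurve : HasDerivAt (fun z : ℝ => (z, (t : ℝ))) (1, 0) y :=
        (hasDerivAt_id y).prodMk (hasDerivAt_const y t)
      have h1 : HasDerivAt (fun z => g (z, t)) ((e.symm : (ℝ×ℝ) →L[ℝ] (ℝ×ℝ)) (1, 0)) y :=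
        gfd.comp_hasDerivAt y hcurve
      have h2 : HasDerivAt (fun z => (g (z, t)).1) ((e.symm (1, 0)).1) y :=
        (hasFDerivAt_fst (p := g (y, t))).comp_hasDerivAt (f := fun z => g (z, t)) y h1
      exact hu₀der.comp y h2
    -- eventual equalities
    have hevT : (fun τ => u y τ) =ᶠ[nhds t] (fun τ => u₀ ((g (y, τ)).1)) := by
      have htend : Filter.Tendsto (fun τ : ℝ => ((y : ℝ), τ)) (nhds t) (nhds ((y : ℝ), t)) :=
        ((continuous_const.prodMk continuous_id).continuousAt (x := t))
      have hev1 : ∀ᶠ τ in nhds t, Ψ (g (y, τ)) = (y, τ) := htend.eventually gev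
      have hev2 : ∀ᶠ τ in nhds t, τ ∈ Set.Ico (0:ℝ) T :=
        Filter.eventually_of_mem (Ioo_mem_nhds ht.1 ht.2) fun τ hτ => Set.Ioo_subset_Ico_self hτ
      filter_upwards [hev1, hev2] with τ h1 h2
      exact (agree g (y, τ) h1 h2).symm
    have hevX : (fun z => u z t) =ᶠ[nhds y] (fun z => u₀ ((g (z, t)).1)) := by
      have htend : Filter.Tendsto (fun z : ℝ => (z, (t : ℝ))) (nhds y) (nhds ((y : ℝ), t)) :=
        ((continuous_id.prodMk continuous_const).continuousAt (x := y))
      have hev1 : ∀ᶠ z in nhds y, Ψ (g (z, t)) = (z, t) := htend.eventually gev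
      filter_upwards [hev1] with z h1
      exact (agree g (z, t) h1 htIco).symm
    have hd1 : deriv (fun τ => u y τ) t = deriv u₀ (F y t) * ((e.symm (0, 1)).1) := by
      rw [hevT.deriv_eq]; exact hderT.deriv
    have hd2 : deriv (fun z => u z t) y = deriv u₀ (F y t) * ((e.symm (1, 0)).1) := by
      rw [hevX.deriv_eq]; exact hderX.deriv
    have huy : u y t = u₀ (F y t) := rfl
    rw [hd1, hd2, huy, hedef]
    simp [burgersEquiv]
    field_simp
    ring
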